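/- Let X and Z be real Hilbert spaces, let E : X → Z be a bounded linear operator with dense range, and let φ : X → ℝ ∪ {+∞} be proper, densely defined, convex, lower semicontinuous and E-elliptic. Define φ_E(z) = inf{φ(x) : x ∈ X, Ex = z} (with inf ∅ = +∞). Then φ_E(z) > −∞ for every z ∈ Z, the effective domain of φ_E satisfies D(φ_E) = E(D(φ)) (the image of the effective domain of φ under E), and D(φ_E) is dense in Z. -/
import Mathlib


open RealInnerProductSpace MeasureTheory

/-- Convexity for an `EReal`-valued functional. -/
def ConvexEReal {V : Type*} [AddCommGroup V] [Module ℝ V] (φ : V → EReal) : Prop :=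
  ∀ x y : V, ∀ a b : ℝ, 0 ≤ a → 0 ≤ b → a + b = 1 →
    φ (a • x + b • y) ≤ (a : EReal) * φ x + (b : EReal) * φ y

/-- Coercivity: all sublevel sets are bounded. -/
def CoerciveEReal {V : Type*} [NormedAddCommGroup V] (φ : V → EReal) : Prop :=
  ∀ c : ℝ, Bornology.IsBounded {x : V | φ x ≤ (c : EReal)}

/-- `E`-ellipticity of a functional `φ` : there is `ω ∈ ℝ` such that the shifted
functional `x ↦ (ω/2)‖E x‖² + φ(x)` is convex and coercive. -/
def IsElliptic {X Z : Type*} [NormedAddCommGroup X] [InnerProductSpace ℝ X]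
    [NormedAddCommGroup Z] [InnerProductSpace ℝ Z]
    (E : X →L[ℝ] Z) (φ : X → EReal) : Prop :=
  ∃ ω : ℝ, ConvexEReal (fun x => ((ω / 2 * ‖E x‖ ^ 2 : ℝ) : EReal) + φ x) ∧
    CoerciveEReal (fun x => ((ω / 2 * ‖E x‖ ^ 2 : ℝ) : EReal) + φ x)

/-- Push-forward functional `φ_E(z) = inf {φ(x) : E x = z}` (with `inf ∅ = +∞`). -/
noncomputable def pushForward {X Z : Type*} [NormedAddCommGroup X] [InnerProductSpace ℝ X]
    [NormedAddCommGroup Z] [InnerProductSpace ℝ Z]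
    (E : X →L[ℝ] Z) (φ : X → EReal) : Z → EReal :=
  fun z => sInf (φ '' {x : X | E x = z})

variable {X Z : Type*} [NormedAddCommGroup X] [InnerProductSpace ℝ X] [CompleteSpace X]
  [NormedAddCommGroup Z] [InnerProductSpace ℝ Z] [CompleteSpace Z]

/-- For a densely defined, proper, convex, lower semicontinuous and
`E`-elliptic functional `φ` with values in `ℝ ∪ {+∞}` and `E` with dense range, the
push-forward `φ_E(z) = inf {φ(x) : E x = z}` never takes the value `−∞`, its effective
domain is `E(D(φ))`, and its effective domain is dense in `Z`. -/
theorem pushForward_proper_domain (E : X →L[ℝ] Z) (hrange : Dense (Set.range E))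
    (φ : X → EReal) (hbot : ∀ x, φ x ≠ ⊥) (hproper : ∃ x, φ x < ⊤)
    (hdense : Dense {x : X | φ x < ⊤}) (hconv : ConvexEReal φ)
    (hlsc : LowerSemicontinuous φ) (hell : IsElliptic E φ) :
    (∀ z : Z, pushForward E φ z ≠ ⊥) ∧
      {z : Z | pushForward E φ z < ⊤} = E '' {x : X | φ x < ⊤} ∧
      Dense {z : Z | pushForward E φ z < ⊤} := by
  obtain ⟨ω, hψconv, hψcoer⟩ := hell
  set ψ : X → EReal := fun x => ((ω / 2 * ‖E x‖ ^ 2 : ℝ) : EReal) + φ x with hψdef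
  have hψbot : ∀ x, ψ x ≠ ⊥ := by
    intro x h
    rcases EReal.add_eq_bot_iff.1 h with h | h
    · exact EReal.coe_ne_bot _ h
    · exact hbot x h
  have hψlsc : LowerSemicontinuous ψ := by
    have hc : Continuous fun x : X => ((ω / 2 * ‖E x‖ ^ 2 : ℝ) : EReal) := by
      apply continuous_coe_real_ereal.comp
      continuity
    exact hc.lowerSemicontinuous.add' hlsc fun x =>
      EReal.continuousAt_add (Or.inl (EReal.coe_ne_top _)) (Or.inl (EReal.coe_ne_bot _))
  -- the epigraph of ψ in X × ℝ
  set S : Set (X × ℝ) := {p | ψ p.1 ≤ (p.2 : EReal)} with hSdef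
  have hSclosed : IsClosed S := by
    have h1 : IsClosed {p : X × EReal | ψ p.1 ≤ p.2} := hψlsc.isClosed_epigraph
    exact h1.preimage (continuous_fst.prodMk (continuous_coe_real_ereal.comp continuous_snd))
  have hSconvex : Convex ℝ S := by
    rintro ⟨x, s⟩ hx ⟨y, t⟩ hy a b ha hb hab
    simp only [hSdef, Set.mem_setOf_eq] at hx hy ⊢
    have h1 : ψ (a • x + b • y) ≤ (a : EReal) * ψ x + (b : EReal) * ψ y :=
      hψconv x y a b ha hb hab
    have ha' : (0 : EReal) ≤ (a : EReal) := by exact_mod_cast ha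
    have hb' : (0 : EReal) ≤ (b : EReal) := by exact_mod_cast hb
    calc ψ (a • x + b • y) ≤ (a : EReal) * ψ x + (b : EReal) * ψ y := h1
      _ ≤ (a : EReal) * (s : EReal) + (b : EReal) * (t : EReal) := by
          exact add_le_add (mul_le_mul_of_nonneg_left hx ha')
            (mul_le_mul_of_nonneg_left hy hb')
      _ = ((a * s + b * t : ℝ) : EReal) := by
          rw [EReal.coe_add, EReal.coe_mul, EReal.coe_mul]
  -- a point where ψ is finite
  obtain ⟨x₀, hx₀⟩ := hproper
  obtain ⟨rφ, hrφ⟩ : ∃ r : ℝ, φ x₀ = (r : EReal) := by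
    lift φ x₀ to ℝ using ⟨hx₀.ne, hbot x₀⟩ with r hr
    exact ⟨r, rfl⟩
  obtain ⟨r₀, hr₀⟩ : ∃ r : ℝ, ψ x₀ = (r : EReal) := by
    refine ⟨ω / 2 * ‖E x₀‖ ^ 2 + rφ, ?_⟩
    show ((ω / 2 * ‖E x₀‖ ^ 2 : ℝ) : EReal) + φ x₀ = _
    rw [hrφ, ← EReal.coe_add]
  have hmem : ((x₀, r₀) : X × ℝ) ∈ S := by
    simp only [hSdef, Set.mem_setOf_eq, hr₀, le_refl]
  have hnotmem : ((x₀, r₀ - 1) : X × ℝ) ∉ S := by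
    simp only [hSdef, Set.mem_setOf_eq, hr₀, EReal.coe_le_coe_iff, not_le]
    linarith
  -- Hahn-Banach separation
  obtain ⟨f, u, hfu, hall⟩ := geometric_hahn_banach_point_closed hSconvex hSclosed hnotmem
  have hf_split : ∀ (x : X) (t : ℝ), f (x, t) = f (x, 0) + t * f (0, 1) := by
    intro x t
    have : ((x, t) : X × ℝ) = (x, 0) + t • ((0 : X), (1 : ℝ)) := by
      simp [Prod.ext_iff]
    rw [this, map_add, f.map_smul]
    simp [smul_eq_mul]
  set c : ℝ := f (0, 1) with hcdef
  -- c > 0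
  have hcpos : 0 < c := by
    have h1 : u < f (x₀, r₀) := hall _ hmem
    rw [hf_split] at h1 hfu
    nlinarith
  -- affine minorant on bounded sets: if ‖x‖ ≤ R then ψ x ≥ (u - ‖f‖ * R)/c
  have hminor : ∀ (R : ℝ) (x : X), ‖x‖ ≤ R → (((u - ‖f‖ * R) / c : ℝ) : EReal) ≤ ψ x := by
    intro R x hxR
    rcases eq_or_ne (ψ x) ⊤ with h | h
    · rw [h]; exact le_top
    · lift ψ x to ℝ using ⟨h, hψbot x⟩ with r hr
      have hxS : ((x, r) : X × ℝ) ∈ S := by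
        show ψ x ≤ ((r : ℝ) : EReal)
        exact le_of_eq hr.symm
      have h1 : u < f (x, r) := hall _ hxS
      rw [hf_split] at h1
      have h2 : f (x, 0) ≤ ‖f‖ * R := by
        have h3 : f (x, 0) ≤ ‖f‖ * ‖((x, 0) : X × ℝ)‖ :=
          le_trans (le_abs_self _) (f.le_opNorm _)
        have h4 : ‖((x, 0) : X × ℝ)‖ = ‖x‖ := by
          simp [Prod.norm_def]
        rw [h4] at h3
        calc f (x, 0) ≤ ‖f‖ * ‖x‖ := h3
          _ ≤ ‖f‖ * R := by
              exact mul_le_mul_of_nonneg_left hxR (norm_nonneg f)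
      rw [EReal.coe_le_coe_iff, div_le_iff₀ hcpos]
      nlinarith
  -- global lower bound
  obtain ⟨R, hR⟩ := (isBounded_iff_forall_norm_le).1 (hψcoer 0)
  set m₁ : ℝ := (u - ‖f‖ * R) / c with hm₁def
  have hglobal : ∀ x : X, ((min m₁ 0 : ℝ) : EReal) ≤ ψ x := by
    intro x
    rcases le_or_gt (ψ x) ((0 : ℝ) : EReal) with h | h
    · have hx : ‖x‖ ≤ R := hR x h
      exact le_trans (by exact_mod_cast min_le_left m₁ 0) (hminor R x hx)
    · exact le_of_lt (lt_of_le_of_lt (by exact_mod_cast min_le_right m₁ 0) h)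
  -- Part 1: pushForward never ⊥
  have part1 : ∀ z : Z, pushForward E φ z ≠ ⊥ := by
    intro z
    have hle : ((min m₁ 0 - ω / 2 * ‖z‖ ^ 2 : ℝ) : EReal) ≤ pushForward E φ z := by
      apply le_sInf
      rintro b ⟨x, hx, rfl⟩
      have hEx : E x = z := hx
      rcases eq_or_ne (φ x) ⊤ with h | h
      · rw [h]; exact le_top
      · lift φ x to ℝ using ⟨h, hbot x⟩ with r hr
        have h1 : ((min m₁ 0 : ℝ) : EReal) ≤ ψ x := hglobal x
        have h2 : ψ x = ((ω / 2 * ‖z‖ ^ 2 + r : ℝ) : EReal) := by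
          show ((ω / 2 * ‖E x‖ ^ 2 : ℝ) : EReal) + φ x = _
          rw [hEx, ← hr, ← EReal.coe_add]
        rw [h2, EReal.coe_le_coe_iff] at h1
        rw [EReal.coe_le_coe_iff]
        linarith
    intro h
    rw [h, le_bot_iff] at hle
    exact EReal.coe_ne_bot _ hle
  -- Part 2: effective domain
  have part2 : {z : Z | pushForward E φ z < ⊤} = E '' {x : X | φ x < ⊤} := by
    ext z
    simp only [Set.mem_setOf_eq, pushForward, sInf_lt_iff, Set.mem_image, Set.mem_setOf_eq]
    constructor
    · rintro ⟨a, ⟨x, hx, rfl⟩, hlt⟩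
      exact ⟨x, hlt, hx⟩
    · rintro ⟨x, hlt, hx⟩
      exact ⟨φ x, ⟨x, hx, rfl⟩, hlt⟩
  refine ⟨part1, part2, ?_⟩
  rw [part2]
  exact DenseRange.dense_image hrange E.continuous hdense
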